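/- Let w : ZMod 4 → Fin 2 × Bool be the cyclic word with values (0,false), (0,true), (1,false), (1,true) at positions 0,1,2,3. Then the under-first danceability number of w is 1, while the over-first danceability number of w is 2. (Thus for a fixed oriented diagram, the under-first and over-first danceability numbers can differ.) -/

import Mathlib

/-- A Gauss code on `n` crossings: each crossing `c` has exactly one over
position (value `(c, true)`) and exactly one under position (value `(c, false)`). -/
def IsGaussCode {n : ℕ} (w : ZMod (2*n) → Fin n × Bool) : Prop :=
  ∀ (c : Fin n) (b : Bool), ∃! i, w i = (c, b)

/-- The cyclic distance from the start of the arc (w.r.t. the cut set `S`)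
containing `p` back to `p`: the least `d` with `p - d ∈ S`. -/
noncomputable def arcDist {m : ℕ} (S : Set (ZMod m)) (p : ZMod m) : ℕ :=
  sInf {d : ℕ | p - (d : ZMod m) ∈ S}

/-- The start of the arc containing `p`, for the cut set `S`. -/
noncomputable def arcStart {m : ℕ} (S : Set (ZMod m)) (p : ZMod m) : ZMod m :=
  p - (arcDist S p : ZMod m)

/-- A valid over-first schedule for `(w, S)`: a bijection `τ` assigning times,
increasing along each arc in arc order, giving every crossing's over position
a smaller time than its under position. -/
def ValidOverFirst {n : ℕ} (w : ZMod (2*n) → Fin n × Bool)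
    (S : Set (ZMod (2*n))) (τ : ZMod (2*n) ≃ Fin (2*n)) : Prop :=
  (∀ p q, arcStart S p = arcStart S q → arcDist S p < arcDist S q →
      (τ p : ℕ) < (τ q : ℕ)) ∧
  ∀ (c : Fin n) (p q), w p = (c, true) → w q = (c, false) → (τ p : ℕ) < (τ q : ℕ)

/-- A valid under-first schedule: increasing along arcs, every crossing's over
position gets a *later* time than its under position. -/
def ValidUnderFirst {n : ℕ} (w : ZMod (2*n) → Fin n × Bool)
    (S : Set (ZMod (2*n))) (τ : ZMod (2*n) ≃ Fin (2*n)) : Prop :=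
  (∀ p q, arcStart S p = arcStart S q → arcDist S p < arcDist S q →
      (τ p : ℕ) < (τ q : ℕ)) ∧
  ∀ (c : Fin n) (p q), w p = (c, true) → w q = (c, false) → (τ q : ℕ) < (τ p : ℕ)

/-- The over-first danceability number of `w`: least cardinality of a nonempty
cut set admitting a valid over-first schedule. -/
noncomputable def overDanceNum {n : ℕ} (w : ZMod (2*n) → Fin n × Bool) : ℕ :=
  sInf {k | ∃ S : Set (ZMod (2*n)), S.Nonempty ∧ Nat.card S = k ∧
    ∃ τ, ValidOverFirst w S τ}

/-- The under-first danceability number of `w`. -/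
noncomputable def underDanceNum {n : ℕ} (w : ZMod (2*n) → Fin n × Bool) : ℕ :=
  sInf {k | ∃ S : Set (ZMod (2*n)), S.Nonempty ∧ Nat.card S = k ∧
    ∃ τ, ValidUnderFirst w S τ}

/-- The set of bridge starts of `w`. -/
def BridgeStarts {n : ℕ} (w : ZMod (2*n) → Fin n × Bool) : Set (ZMod (2*n)) :=
  {p | (w p).2 = true ∧ (w (p - 1)).2 = false}

/-- The reversal of a Gauss code. -/
def revCode {n : ℕ} (w : ZMod (2*n) → Fin n × Bool) :
    ZMod (2*n) → Fin n × Bool :=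
  fun i => w (-(i + 1))

/-- For the cyclic word (0,false),(0,true),(1,false),(1,true) on `ZMod 4`,
the under-first danceability number is 1 while the over-first danceability
number is 2. -/
instance : NeZero (2*2) := ⟨by norm_num⟩

lemma natCast_val_zmod {m : ℕ} [NeZero m] (a : ZMod m) : ((a.val : ℕ) : ZMod m) = a :=
  ZMod.natCast_rightInverse a

lemma my_sInf_eq_one {A : Set ℕ} (h1 : 1 ∈ A) (h0 : (0:ℕ) ∉ A) : sInf A = 1 := by
  have hle := Nat.sInf_le h1
  have hne : sInf A ≠ 0 := fun h => h0 (h ▸ Nat.sInf_mem ⟨1, h1⟩)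
  omega

lemma arcDist_singleton {m : ℕ} [NeZero m] (s p : ZMod m) :
    arcDist {s} p = (p - s).val := by
  apply le_antisymm
  · apply Nat.sInf_le
    show p - ((p - s).val : ZMod m) ∈ ({s} : Set (ZMod m))
    rw [natCast_val_zmod]; simp
  · refine le_csInf ⟨(p-s).val, by show _ ∈ ({s} : Set (ZMod m)); rw [natCast_val_zmod]; simp⟩
      fun d hd => ?_
    have hd' : (d : ZMod m) = p - s := by
      have h : p - (d : ZMod m) = s := hd
      linear_combination -h
    have hv : ((d : ZMod m)).val = d % m := ZMod.val_natCast m d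
    rw [hd'] at hv
    have := Nat.mod_le d m
    omega

lemma arcStart_singleton {m : ℕ} [NeZero m] (s p : ZMod m) :
    arcStart {s} p = s := by
  rw [arcStart, arcDist_singleton, natCast_val_zmod]; ring

lemma arcDist_eq_zero {m : ℕ} {S : Set (ZMod m)} {p : ZMod m} (h : p ∈ S) :
    arcDist S p = 0 :=
  Nat.sInf_eq_zero.mpr (Or.inl (by show p - ((0:ℕ) : ZMod m) ∈ S; simpa using h))

lemma arcDist_eq_one {m : ℕ} {S : Set (ZMod m)} {p : ZMod m}
    (h0 : p ∉ S) (h1 : p - 1 ∈ S) : arcDist S p = 1 := by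
  apply my_sInf_eq_one
  · show p - ((1:ℕ) : ZMod m) ∈ S; simpa using h1
  · show ¬ (p - ((0:ℕ) : ZMod m) ∈ S); simpa using h0

def tauUnder : ZMod (2*2) ≃ Fin (2*2) := ⟨![0,1,2,3], ![0,1,2,3], by unfold Function.LeftInverse; decide, by unfold Function.RightInverse Function.LeftInverse; decide⟩
def tauOver : ZMod (2*2) ≃ Fin (2*2) := ⟨![3,0,2,1], ![1,3,2,0], by unfold Function.LeftInverse; decide, by unfold Function.RightInverse Function.LeftInverse; decide⟩

lemma zmod4_cases : ∀ p : ZMod (2*2), p = 0 ∨ p = 1 ∨ p = 2 ∨ p = 3 := by decide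

theorem underDance_ne_overDance_example
    (w : ZMod (2*2) → Fin 2 × Bool)
    (h0 : w 0 = (0, false)) (h1 : w 1 = (0, true))
    (h2 : w 2 = (1, false)) (h3 : w 3 = (1, true)) :
    underDanceNum w = 1 ∧ overDanceNum w = 2 := by
  constructor
  · -- underDanceNum w = 1
    have hvalid : ValidUnderFirst w {0} tauUnder := by
      constructor
      · simp only [arcDist_singleton, arcStart_singleton]
        decide
      · intro c p q hp hq
        rcases zmod4_cases p with rfl | rfl | rfl | rfl <;>
          rcases zmod4_cases q with rfl | rfl | rfl | rfl <;>
          simp_all <;> decide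
    have hA1 : (1:ℕ) ∈ {k | ∃ S : Set (ZMod (2*2)), S.Nonempty ∧ Nat.card S = k ∧
        ∃ τ, ValidUnderFirst w S τ} :=
      ⟨{0}, ⟨0, rfl⟩, by rw [Nat.card_coe_set_eq, Set.ncard_singleton], tauUnder, hvalid⟩
    have hA0 : ∀ k ∈ {k | ∃ S : Set (ZMod (2*2)), S.Nonempty ∧ Nat.card S = k ∧
        ∃ τ, ValidUnderFirst w S τ}, k ≠ 0 := by
      rintro k ⟨S, hne, hcard, -⟩ rfl
      have : Nonempty S := hne.to_subtype
      have := Nat.card_pos (α := S)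
      omega
    have hmem := Nat.sInf_mem ⟨1, hA1⟩
    have hle := Nat.sInf_le hA1
    have := hA0 _ hmem
    show sInf _ = 1
    omega
  · -- overDanceNum w = 2
    have e1 : arcDist ({1,3} : Set (ZMod (2*2))) 1 = 0 := arcDist_eq_zero (by simp)
    have e3 : arcDist ({1,3} : Set (ZMod (2*2))) 3 = 0 := arcDist_eq_zero (by simp)
    have e2 : arcDist ({1,3} : Set (ZMod (2*2))) 2 = 1 :=
      arcDist_eq_one (by simp only [Set.mem_insert_iff, Set.mem_singleton_iff]; decide)
        (by simp only [Set.mem_insert_iff, Set.mem_singleton_iff]; decide)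
    have e0 : arcDist ({1,3} : Set (ZMod (2*2))) 0 = 1 :=
      arcDist_eq_one (by simp only [Set.mem_insert_iff, Set.mem_singleton_iff]; decide)
        (by simp only [Set.mem_insert_iff, Set.mem_singleton_iff]; decide)
    have f0 : arcStart ({1,3} : Set (ZMod (2*2))) 0 = 3 := by rw [arcStart, e0]; decide
    have f1 : arcStart ({1,3} : Set (ZMod (2*2))) 1 = 1 := by rw [arcStart, e1]; decide
    have f2 : arcStart ({1,3} : Set (ZMod (2*2))) 2 = 1 := by rw [arcStart, e2]; decide
    have f3 : arcStart ({1,3} : Set (ZMod (2*2))) 3 = 3 := by rw [arcStart, e3]; decide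
    have hvalid : ValidOverFirst w {1,3} tauOver := by
      constructor
      · intro p q hst hlt
        rcases zmod4_cases p with rfl | rfl | rfl | rfl <;>
          rcases zmod4_cases q with rfl | rfl | rfl | rfl <;>
          simp only [e0, e1, e2, e3] at hlt <;>
          simp only [f0, f1, f2, f3] at hst <;>
          first
            | omega
            | (exact absurd hst (by decide))
            | decide
      · intro c p q hp hq
        rcases zmod4_cases p with rfl | rfl | rfl | rfl <;>
          rcases zmod4_cases q with rfl | rfl | rfl | rfl <;>
          simp_all <;> decide
    have hB2 : (2:ℕ) ∈ {k | ∃ S : Set (ZMod (2*2)), S.Nonempty ∧ Nat.card S = k ∧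
        ∃ τ, ValidOverFirst w S τ} :=
      ⟨{1,3}, ⟨1, by simp⟩, by rw [Nat.card_coe_set_eq, Set.ncard_pair (by decide)],
        tauOver, hvalid⟩
    have hB0 : ∀ k ∈ {k | ∃ S : Set (ZMod (2*2)), S.Nonempty ∧ Nat.card S = k ∧
        ∃ τ, ValidOverFirst w S τ}, k ≠ 0 := by
      rintro k ⟨S, hne, hcard, -⟩ rfl
      have : Nonempty S := hne.to_subtype
      have := Nat.card_pos (α := S)
      omega
    have hB1 : ∀ k ∈ {k | ∃ S : Set (ZMod (2*2)), S.Nonempty ∧ Nat.card S = k ∧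
        ∃ τ, ValidOverFirst w S τ}, k ≠ 1 := by
      rintro k ⟨S, hne, hcard, τ, hτ⟩ rfl
      rw [Nat.card_coe_set_eq, Set.ncard_eq_one] at hcard
      obtain ⟨s, rfl⟩ := hcard
      have mono : ∀ p q : ZMod (2*2), (p - s).val < (q - s).val → (τ p : ℕ) < (τ q : ℕ) :=
        fun p q h => hτ.1 p q (by rw [arcStart_singleton, arcStart_singleton])
          (by rw [arcDist_singleton, arcDist_singleton]; exact h)
      rcases zmod4_cases s with rfl | rfl | rfl | rfl
      · have hA := mono 0 1 (by decide)
        have hB := hτ.2 0 1 0 h1 h0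
        omega
      · have hA := mono 2 3 (by decide)
        have hB := hτ.2 1 3 2 h3 h2
        omega
      · have hA := mono 0 1 (by decide)
        have hB := hτ.2 0 1 0 h1 h0
        omega
      · have hA := mono 0 1 (by decide)
        have hB := hτ.2 0 1 0 h1 h0
        omega
    have hmem := Nat.sInf_mem ⟨2, hB2⟩
    have hle := Nat.sInf_le hB2
    have := hB0 _ hmem
    have := hB1 _ hmem
    show sInf _ = 2
    omega
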